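/- arXiv:1808.03678 — 2 statements merged into one kernel-verified Lean document; each statement's English description precedes it below -/
import Mathlib

section
/- Let R be a commutative Noetherian ring and M a finitely generated R-module. Then the set of primes p in Spec R such that the R_p-module M_p has finite projective dimension is an open subset of Spec R. -/
open CategoryTheory

universe u

/-- A commutative ring `A` is a regular local ring if it is Noetherian, local, and its
maximal ideal can be generated by `d` elements, where `d` is the Krull dimension of `A`. -/
def IsRegularLocal (A : Type u) [CommRing A] : Prop :=
  IsNoetherianRing A ∧ ∃ h : IsLocalRing A,
    ∃ s : Finset A, Ideal.span (s : Set A) = @IsLocalRing.maximalIdeal A _ h ∧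
      (s.card : WithBot (WithTop ℕ)) = ringKrullDim A

/-- The regular locus of `R`: the set of primes `p` such that the localization `R_p`
is a regular local ring. -/
def regularLocus (R : Type u) [CommRing R] : Set (PrimeSpectrum R) :=
  { p | IsRegularLocal (Localization.AtPrime p.asIdeal) }

/-- A commutative ring is regular if all its localizations at primes are regular local rings. -/
def IsRegularRing' (A : Type u) [CommRing A] : Prop :=
  ∀ q : PrimeSpectrum A, IsRegularLocal (Localization.AtPrime q.asIdeal)

/-- `M` has finite projective dimension over `R` if it admits a finite-length
resolution by projective `R`-modules. -/
def HasFiniteProjDim (R : Type u) [CommRing R] (M : Type u) [AddCommGroup M]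
    [Module R M] : Prop :=
  ∃ (n : ℕ) (P : ℕ → ModuleCat.{u} R) (d : ∀ i, P (i + 1) →ₗ[R] P i) (ε : P 0 →ₗ[R] M),
    (∀ i, Module.Projective R (P i)) ∧
    Function.Surjective ε ∧
    LinearMap.range (d 0) = LinearMap.ker ε ∧
    (∀ i, LinearMap.range (d (i + 1)) = LinearMap.ker (d i)) ∧
    (∀ i, n < i → Subsingleton (P i))

/-- The locus of primes `p` where the localization `M_p` has finite projective
dimension over `R_p`. -/
def finProjDimLocus (R : Type u) [CommRing R] (M : Type u) [AddCommGroup M]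
    [Module R M] : Set (PrimeSpectrum R) :=
  { p | HasFiniteProjDim (Localization.AtPrime p.asIdeal)
      (LocalizedModule p.asIdeal.primeCompl M) }

/-- `G` is a generator for the category of finitely generated `R`-modules:
`G` is finitely generated, and any class of finitely generated modules containing `G`
which is closed under isomorphisms and direct summands and satisfies the two-out-of-three
property for short exact sequences contains all finitely generated modules. -/
def IsModGenerator (R : Type u) [CommRing R] (G : ModuleCat.{u} R) : Prop :=
  Module.Finite R G ∧
  ∀ S : Set (ModuleCat.{u} R),
    G ∈ S →
    (∀ M N : ModuleCat.{u} R, M ∈ S → Nonempty (M ≃ₗ[R] N) → N ∈ S) →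
    (∀ M N : ModuleCat.{u} R, Module.Finite R M → Module.Finite R N → M ∈ S →
      (∃ (i : N →ₗ[R] M) (r : M →ₗ[R] N), r ∘ₗ i = LinearMap.id) → N ∈ S) →
    (∀ X Y Z : ModuleCat.{u} R, Module.Finite R X → Module.Finite R Y → Module.Finite R Z →
      ∀ (f : X →ₗ[R] Y) (g : Y →ₗ[R] Z), Function.Injective f → Function.Surjective g →
        LinearMap.range f = LinearMap.ker g →
        ((X ∈ S ∧ Y ∈ S → Z ∈ S) ∧ (Y ∈ S ∧ Z ∈ S → X ∈ S) ∧ (X ∈ S ∧ Z ∈ S → Y ∈ S))) →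
    ∀ M : ModuleCat.{u} R, Module.Finite R M → M ∈ S

section PdAux
def PdLE (R : Type u) [CommRing R] : ℕ → ModuleCat.{u} R → Prop
  | 0, M => Module.Projective R M
  | n+1, M => Module.Projective R M ∨
      ∃ (K P : ModuleCat.{u} R) (i : K →ₗ[R] P) (g : P →ₗ[R] M),
        Module.Projective R P ∧ Function.Injective i ∧ Function.Surjective g ∧
        Function.Exact i g ∧ PdLE R n K

variable {R : Type u} [CommRing R]

lemma pdLE_of_projective {M : ModuleCat.{u} R} (h : Module.Projective R M) :
    ∀ n, PdLE R n M
  | 0 => h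
  | _+1 => Or.inl h

lemma pdLE_congr {n : ℕ} {M N : ModuleCat.{u} R} (e : M ≃ₗ[R] N) (h : PdLE R n M) :
    PdLE R n N := by
  cases n with
  | zero =>
    haveI : Module.Projective R M := h
    exact Module.Projective.of_equiv e
  | succ n =>
    rcases h with h | ⟨K, P, i, g, hP, hi, hg, hex, hK⟩
    · haveI : Module.Projective R M := h
      exact Or.inl (Module.Projective.of_equiv e)
    · refine Or.inr ⟨K, P, i, e.toLinearMap ∘ₗ g, hP, hi, e.surjective.comp hg, ?_, hK⟩
      intro y
      rw [LinearMap.comp_apply, LinearEquiv.coe_coe, LinearEquiv.map_eq_zero_iff]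
      exact hex y

lemma pdLE_prod {n : ℕ} {M Q : ModuleCat.{u} R} (hQ : Module.Projective R Q)
    (h : PdLE R n M) : PdLE R n (ModuleCat.of R (↥M × ↥Q)) := by
  haveI := hQ
  cases n with
  | zero =>
    haveI : Module.Projective R M := h
    exact inferInstanceAs (Module.Projective R (↥M × ↥Q))
  | succ n =>
    rcases h with h | ⟨K, P, i, g, hP, hi, hg, hex, hK⟩
    · haveI : Module.Projective R M := h
      exact Or.inl (inferInstanceAs (Module.Projective R (↥M × ↥Q)))
    · haveI := hP
      refine Or.inr ⟨K, ModuleCat.of R (↥P × ↥Q), (LinearMap.inl R ↥P ↥Q) ∘ₗ i,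
        g.prodMap LinearMap.id, inferInstanceAs (Module.Projective R (↥P × ↥Q)),
        ?_, ?_, ?_, hK⟩
      · intro a b hab
        exact hi (congrArg Prod.fst hab)
      · rintro ⟨a, b⟩
        obtain ⟨x, hx⟩ := hg a
        exact ⟨(x, b), by show ((g x : ↥M), b) = (a, b); rw [hx]⟩
      · rintro ⟨a, b⟩
        constructor
        · intro h0
          have h1 : g a = 0 := congrArg Prod.fst h0
          have h2 : b = 0 := congrArg Prod.snd h0
          obtain ⟨k, hk⟩ := (hex a).mp h1
          exact ⟨k, by show ((i k : ↥P), (0 : ↥Q)) = (a, b); rw [hk, h2]⟩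
        · rintro ⟨k, hk⟩
          have h1 : i k = a := congrArg Prod.fst hk
          have h2 : (0 : ↥Q) = b := congrArg Prod.snd hk
          show ((g a : ↥M), b) = 0
          exact Prod.ext ((hex a).mpr ⟨k, h1⟩) h2.symm

lemma pdLE_of_prod {n : ℕ} {M Q : ModuleCat.{u} R} (hQ : Module.Projective R Q)
    (h : PdLE R n (ModuleCat.of R (↥M × ↥Q))) : PdLE R n M := by
  haveI := hQ
  have proj_case : Module.Projective R (↥M × ↥Q) → Module.Projective R M := fun hp =>
    letI := hp
    Module.Projective.of_split (LinearMap.inl R ↥M ↥Q) (LinearMap.fst R ↥M ↥Q)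
      (LinearMap.ext fun _ => rfl)
  cases n with
  | zero => exact proj_case h
  | succ n =>
    rcases h with h | ⟨K, P, i, g, hP, hi, hg, hex, hK⟩
    · exact Or.inl (proj_case h)
    · haveI := hP
      let g₁ : P →ₗ[R] M := (LinearMap.fst R ↥M ↥Q) ∘ₗ g
      let K' := LinearMap.ker g₁
      let π : ↥K' →ₗ[R] ↥Q := (LinearMap.snd R ↥M ↥Q) ∘ₗ g ∘ₗ K'.subtype
      have hmemK : ∀ k : ↥K, g₁ (i k) = 0 := fun k => by
        have h0 : g (i k) = 0 := hex.apply_apply_eq_zero k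
        show (LinearMap.fst R ↥M ↥Q) (g (i k)) = 0
        rw [h0, map_zero]
      let j : ↥K →ₗ[R] ↥K' := LinearMap.codRestrict K' i hmemK
      have hj : Function.Injective j := fun a b hab => hi (congrArg Subtype.val hab)
      have hπ : Function.Surjective π := by
        intro q
        obtain ⟨p, hp⟩ := hg ((0 : ↥M), q)
        exact ⟨⟨p, congrArg Prod.fst hp⟩, congrArg Prod.snd hp⟩
      have hexjπ : Function.Exact j π := by
        intro y
        constructor
        · intro hy
          have h2 : (LinearMap.fst R ↥M ↥Q) (g ↑y) = 0 := y.2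
          have hy' : (LinearMap.snd R ↥M ↥Q) (g ↑y) = 0 := hy
          have h1 : g ↑y = 0 := Prod.ext h2 hy'
          obtain ⟨k, hk⟩ := (hex ↑y).mp h1
          exact ⟨k, Subtype.ext hk⟩
        · rintro ⟨k, rfl⟩
          show (LinearMap.snd R ↥M ↥Q) (g (i k)) = 0
          rw [hex.apply_apply_eq_zero k, map_zero]
      obtain ⟨l, hl⟩ := Module.projective_lifting_property π LinearMap.id hπ
      let e : ↥K' ≃ₗ[R] ↥K × ↥Q := (hexjπ.splitSurjectiveEquiv hj ⟨l, hl⟩).1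
      refine Or.inr ⟨ModuleCat.of R ↥K', P, K'.subtype, g₁, hP, Subtype.val_injective,
        ?_, LinearMap.exact_subtype_ker_map g₁, ?_⟩
      · intro m
        obtain ⟨p, hp⟩ := hg (m, (0 : ↥Q))
        exact ⟨p, congrArg Prod.fst hp⟩
      · exact pdLE_congr e.symm (pdLE_prod hQ hK)


lemma schanuel_half {M K P K' P' : ModuleCat.{u} R}
    (i : K →ₗ[R] P) (g : P →ₗ[R] M) (i' : K' →ₗ[R] P') (g' : P' →ₗ[R] M)
    (hP : Module.Projective R P)
    (hi' : Function.Injective i') (hg' : Function.Surjective g')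
    (hex : Function.Exact i g) (hex' : Function.Exact i' g') :
    ∃ X : Submodule R (↥P × ↥P'),
      Nonempty (↥X ≃ₗ[R] ↥K' × ↥P) ∧ ∀ y : ↥P × ↥P', y ∈ X ↔ g y.1 = g' y.2 := by
  haveI := hP
  let φ : (↥P × ↥P') →ₗ[R] ↥M := (g ∘ₗ LinearMap.fst R ↥P ↥P') - (g' ∘ₗ LinearMap.snd R ↥P ↥P')
  let X := LinearMap.ker φ
  have hmem : ∀ y : ↥P × ↥P', y ∈ X ↔ g y.1 = g' y.2 := fun y => by
    simp only [X, φ, LinearMap.mem_ker, LinearMap.sub_apply, LinearMap.comp_apply,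
      LinearMap.fst_apply, LinearMap.snd_apply, sub_eq_zero]
  let π : ↥X →ₗ[R] ↥P := (LinearMap.fst R ↥P ↥P') ∘ₗ X.subtype
  have hπ : Function.Surjective π := by
    intro p
    obtain ⟨p', hp'⟩ := hg' (g p)
    exact ⟨⟨(p, p'), (hmem _).mpr hp'.symm⟩, rfl⟩
  let j : ↥K' →ₗ[R] ↥X := LinearMap.codRestrict X ((LinearMap.inr R ↥P ↥P') ∘ₗ i')
    (fun k => (hmem _).mpr ((map_zero g).trans (hex'.apply_apply_eq_zero k).symm))
  have hj : Function.Injective j := by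
    intro a b hab
    exact hi' (congrArg (fun z : ↥X => (z : ↥P × ↥P').2) hab)
  have hexjπ : Function.Exact j π := by
    intro y
    constructor
    · intro hy
      have hy1 : (y : ↥P × ↥P').1 = 0 := hy
      have h2 : g' (y : ↥P × ↥P').2 = 0 := by
        rw [← (hmem _).mp y.2, hy1, map_zero]
      obtain ⟨k, hk⟩ := (hex' _).mp h2
      exact ⟨k, Subtype.ext (Prod.ext hy1.symm hk)⟩
    · rintro ⟨k, rfl⟩
      rfl
  obtain ⟨l, hl⟩ := Module.projective_lifting_property π LinearMap.id hπ
  exact ⟨X, ⟨(hexjπ.splitSurjectiveEquiv hj ⟨l, hl⟩).1⟩, hmem⟩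

lemma schanuel {M K P K' P' : ModuleCat.{u} R}
    (i : K →ₗ[R] P) (g : P →ₗ[R] M) (i' : K' →ₗ[R] P') (g' : P' →ₗ[R] M)
    (hP : Module.Projective R P) (hP' : Module.Projective R P')
    (hi : Function.Injective i) (hg : Function.Surjective g)
    (hi' : Function.Injective i') (hg' : Function.Surjective g')
    (hex : Function.Exact i g) (hex' : Function.Exact i' g') :
    Nonempty ((↥K × ↥P') ≃ₗ[R] ↥K' × ↥P) := by
  obtain ⟨X₁, ⟨e₁⟩, hmem₁⟩ := schanuel_half i g i' g' hP hi' hg' hex hex'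
  obtain ⟨X₂, ⟨e₂⟩, hmem₂⟩ := schanuel_half i' g' i g hP' hi hg hex' hex
  -- X₁ ⊆ P × P',  X₂ ⊆ P' × P ; swap equivalence
  let f12 : ↥X₁ →ₗ[R] ↥X₂ := LinearMap.codRestrict X₂
    ((LinearEquiv.prodComm R ↥P ↥P').toLinearMap ∘ₗ X₁.subtype)
    (fun y => (hmem₂ _).mpr ((hmem₁ _).mp y.2).symm)
  let f21 : ↥X₂ →ₗ[R] ↥X₁ := LinearMap.codRestrict X₁
    ((LinearEquiv.prodComm R ↥P' ↥P).toLinearMap ∘ₗ X₂.subtype)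
    (fun y => (hmem₁ _).mpr ((hmem₂ _).mp y.2).symm)
  let eswap : ↥X₂ ≃ₗ[R] ↥X₁ := LinearEquiv.ofLinear f21 f12
    (LinearMap.ext fun y => Subtype.ext rfl) (LinearMap.ext fun y => Subtype.ext rfl)
  exact ⟨e₂.symm.trans (eswap.trans e₁)⟩

lemma pdLE_shift {n : ℕ} {M K P : ModuleCat.{u} R}
    (i : K →ₗ[R] P) (g : P →ₗ[R] M)
    (hP : Module.Projective R P) (hi : Function.Injective i)
    (hg : Function.Surjective g) (hex : Function.Exact i g)
    (h : PdLE R (n+1) M) : PdLE R n K := by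
  haveI := hP
  rcases h with hM | ⟨K', P', i', g', hP', hi', hg', hex', hK'⟩
  · haveI := hM
    obtain ⟨l, hl⟩ := Module.projective_lifting_property g LinearMap.id hg
    let e : ↥P ≃ₗ[R] ↥K × ↥M := (hex.splitSurjectiveEquiv hi ⟨l, hl⟩).1
    haveI : Module.Projective R (↥K × ↥M) := Module.Projective.of_equiv e
    have hKproj : Module.Projective R K :=
      Module.Projective.of_split (LinearMap.inl R ↥K ↥M) (LinearMap.fst R ↥K ↥M)
        (LinearMap.ext fun _ => rfl)
    exact pdLE_of_projective hKproj n
  · obtain ⟨e⟩ := schanuel i g i' g' hP hP' hi hg hi' hg' hex hex'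
    have h1 : PdLE R n (ModuleCat.of R (↥K' × ↥P)) := pdLE_prod hP hK'
    have h2 : PdLE R n (ModuleCat.of R (↥K × ↥P')) := pdLE_congr e.symm h1
    exact pdLE_of_prod hP' h2


end PdAux

section Equivalence

variable {R : Type u} [CommRing R]

lemma projective_punit' : Module.Projective R PUnit.{u+1} :=
  Module.Projective.of_split (0 : PUnit.{u+1} →ₗ[R] R) 0
    (LinearMap.ext fun _ => Subsingleton.elim _ _)

lemma submodule_eq_bot_of_subsingleton' {N : Type u} [AddCommGroup N] [Module R N]
    [Subsingleton N] (p : Submodule R N) : p = ⊥ :=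
  eq_bot_iff.mpr fun x _ => (Subsingleton.elim x 0) ▸ Submodule.zero_mem ⊥

lemma chain_to_pdLE : ∀ (n : ℕ) (M : Type u) [AddCommGroup M] [Module R M]
    (P : ℕ → ModuleCat.{u} R) (d : ∀ i, P (i + 1) →ₗ[R] P i) (ε : P 0 →ₗ[R] M)
    (_ : ∀ i, Module.Projective R (P i))
    (_ : Function.Surjective ε)
    (_ : LinearMap.range (d 0) = LinearMap.ker ε)
    (_ : ∀ i, LinearMap.range (d (i + 1)) = LinearMap.ker (d i))
    (_ : ∀ i, n < i → Subsingleton (P i)),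
    PdLE R n (ModuleCat.of R M) := by
  intro n
  induction n with
  | zero =>
    intro M _ _ P d ε hproj hsurj h0 hexd hbd
    haveI : Subsingleton (P 1) := hbd 1 Nat.zero_lt_one
    have hd0 : LinearMap.range (d 0) = ⊥ := by
      have : d 0 = 0 := Subsingleton.elim _ _
      rw [this, LinearMap.range_zero]
    have hker : LinearMap.ker ε = ⊥ := by rw [← h0, hd0]
    have hinj : Function.Injective ε := LinearMap.ker_eq_bot.mp hker
    let e : ↥(P 0) ≃ₗ[R] M := LinearEquiv.ofBijective ε ⟨hinj, hsurj⟩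
    haveI := hproj 0
    exact (Module.Projective.of_equiv e : Module.Projective R M)
  | succ n ih =>
    intro M _ _ P d ε hproj hsurj h0 hexd hbd
    let Ks := LinearMap.ker ε
    have hd0mem : ∀ x, d 0 x ∈ Ks := fun x => by
      show d 0 x ∈ LinearMap.ker ε
      rw [← h0]; exact LinearMap.mem_range_self _ x
    let ε' : ↥(P 1) →ₗ[R] ↥Ks := LinearMap.codRestrict Ks (d 0) hd0mem
    have hε's : Function.Surjective ε' := by
      rintro ⟨k, hk⟩
      have hk2 : k ∈ LinearMap.range (d 0) := by rw [h0]; exact hk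
      obtain ⟨x, hx⟩ := hk2
      exact ⟨x, Subtype.ext hx⟩
    have hK : PdLE R n (ModuleCat.of R ↥Ks) := by
      refine ih ↥Ks (fun i => P (i+1)) (fun i => d (i+1)) ε' (fun i => hproj (i+1)) hε's ?_
        (fun i => hexd (i+1)) (fun i hi => hbd (i+1) (by omega))
      rw [LinearMap.ker_codRestrict]
      exact hexd 0
    refine Or.inr ⟨ModuleCat.of R ↥Ks, P 0, Ks.subtype, ε, hproj 0,
      Subtype.val_injective, hsurj, LinearMap.exact_subtype_ker_map ε, hK⟩

lemma pdLE_to_hfpd_projective (M : Type u) [AddCommGroup M] [Module R M]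
    (h : Module.Projective R M) : HasFiniteProjDim R M := by
  refine ⟨0, fun i => match i with
    | 0 => ModuleCat.of R M
    | _+1 => ModuleCat.of R PUnit.{u+1}, fun i => 0, LinearMap.id, ?_, ?_, ?_, ?_, ?_⟩
  · intro i
    match i with
    | 0 => exact h
    | _+1 => exact projective_punit'
  · exact Function.surjective_id
  · rw [LinearMap.range_zero, LinearMap.ker_id]
  · intro i
    rw [LinearMap.range_zero]
    exact (submodule_eq_bot_of_subsingleton'
      (N := PUnit.{u+1}) (LinearMap.ker (0 : _ →ₗ[R] _))).symm
  · intro i hi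
    match i, hi with
    | (j+1), _ => exact inferInstanceAs (Subsingleton PUnit.{u+1})

lemma pdLE_to_hfpd : ∀ (n : ℕ) (M : Type u) [AddCommGroup M] [Module R M],
    PdLE R n (ModuleCat.of R M) → HasFiniteProjDim R M := by
  intro n
  induction n with
  | zero => intro M _ _ h; exact pdLE_to_hfpd_projective M h
  | succ n ih =>
    intro M _ _ h
    rcases h with h | ⟨K, P, i, g, hP, hi, hg, hex, hK⟩
    · exact pdLE_to_hfpd_projective M h
    · have hK' : PdLE R n (ModuleCat.of R ↥K) := hK
      obtain ⟨m, Q, e, η, hQproj, hηs, hη0, hexQ, hbdQ⟩ := ih ↥K hK'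
      refine ⟨m + 1, fun t => match t with
        | 0 => P
        | j+1 => Q j,
        fun t => match t with
        | 0 => i ∘ₗ η
        | j+1 => e j, g, ?_, hg, ?_, ?_, ?_⟩
      · intro t
        match t with
        | 0 => exact hP
        | j+1 => exact hQproj j
      · -- range (i ∘ₗ η) = ker g
        rw [LinearMap.range_comp, LinearMap.range_eq_top.mpr hηs, Submodule.map_top]
        exact (LinearMap.exact_iff.mp hex).symm
      · intro t
        match t with
        | 0 =>
          show LinearMap.range (e 0) = LinearMap.ker (i ∘ₗ η)
          rw [LinearMap.ker_comp, LinearMap.ker_eq_bot.mpr hi, Submodule.comap_bot]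
          rw [hη0]
        | j+1 => exact hexQ j
      · intro t ht
        match t, ht with
        | (j+1), ht => exact hbdQ j (by omega)

lemma hfpd_iff_pdLE (M : Type u) [AddCommGroup M] [Module R M] :
    HasFiniteProjDim R M ↔ ∃ n, PdLE R n (ModuleCat.of R M) := by
  constructor
  · rintro ⟨n, P, d, ε, hproj, hsurj, h0, hexd, hbd⟩
    exact ⟨n, chain_to_pdLE n M P d ε hproj hsurj h0 hexd hbd⟩
  · rintro ⟨n, h⟩
    exact pdLE_to_hfpd n M h

end Equivalence

section Localization

variable {R : Type u} [CommRing R]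

lemma locMap_coe (S : Submonoid R) {A B : Type u} [AddCommGroup A] [Module R A]
    [AddCommGroup B] [Module R B] (f : A →ₗ[R] B) :
    ⇑(LocalizedModule.map S f) =
      ⇑(IsLocalizedModule.map S (LocalizedModule.mkLinearMap S A)
        (LocalizedModule.mkLinearMap S B) f) := by
  funext x
  induction x using LocalizedModule.induction_on with
  | _ m s => rw [LocalizedModule.map_mk, IsLocalizedModule.map_LocalizedModules]

lemma loc_exact (S : Submonoid R) {A B C : Type u} [AddCommGroup A] [Module R A]
    [AddCommGroup B] [Module R B] [AddCommGroup C] [Module R C]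
    (f : A →ₗ[R] B) (g : B →ₗ[R] C) (h : Function.Exact f g) :
    Function.Exact (LocalizedModule.map S f) (LocalizedModule.map S g) := by
  have h2 := IsLocalizedModule.map_exact S (LocalizedModule.mkLinearMap S A)
    (LocalizedModule.mkLinearMap S B) (LocalizedModule.mkLinearMap S C) f g h
  show Function.Exact ⇑(LocalizedModule.map S f) ⇑(LocalizedModule.map S g)
  rw [locMap_coe S f, locMap_coe S g]
  exact h2

lemma loc_free (S : Submonoid R) {A : Type u} [AddCommGroup A] [Module R A]
    [Module.Free R A] : Module.Free (Localization S) (LocalizedModule S A) :=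
  Module.free_of_isLocalizedModule S (LocalizedModule.mkLinearMap S A)

end Localization

lemma key_locus (R : Type u) [CommRing R] [IsNoetherianRing R] :
    ∀ (n : ℕ) (M : Type u) [AddCommGroup M] [Module R M] [Module.Finite R M]
      (p : PrimeSpectrum R),
      PdLE (Localization.AtPrime p.asIdeal) n
        (ModuleCat.of _ (LocalizedModule p.asIdeal.primeCompl M)) →
      ∃ (K : Type u) (_ : AddCommGroup K) (_ : Module R K) (_ : Module.Finite R K),
        p ∈ Module.freeLocus R K ∧
        ∀ q : PrimeSpectrum R, q ∈ Module.freeLocus R K →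
          PdLE (Localization.AtPrime q.asIdeal) n
            (ModuleCat.of _ (LocalizedModule q.asIdeal.primeCompl M)) := by
  intro n
  induction n with
  | zero =>
    intro M _ _ _ p h
    refine ⟨M, ‹_›, ‹_›, ‹_›, ?_, ?_⟩
    · rw [Module.mem_freeLocus]
      haveI : IsNoetherianRing (Localization.AtPrime p.asIdeal) :=
        IsLocalization.isNoetherianRing p.asIdeal.primeCompl _ ‹_›
      haveI : Module.Finite (Localization.AtPrime p.asIdeal)
          (LocalizedModule p.asIdeal.primeCompl M) :=
        Module.Finite.of_isLocalizedModule p.asIdeal.primeCompl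
          (LocalizedModule.mkLinearMap p.asIdeal.primeCompl M)
      haveI : Module.Projective (Localization.AtPrime p.asIdeal)
          (LocalizedModule p.asIdeal.primeCompl M) := h
      haveI := Module.finitePresentation_of_finite (Localization.AtPrime p.asIdeal)
        (LocalizedModule p.asIdeal.primeCompl M)
      exact Module.free_of_flat_of_isLocalRing
    · intro q hq
      rw [Module.mem_freeLocus] at hq
      haveI := hq
      exact inferInstanceAs (Module.Projective (Localization.AtPrime q.asIdeal)
        (LocalizedModule q.asIdeal.primeCompl M))
  | succ n ih =>
    intro M _ _ _ p hp
    obtain ⟨k, g, hgs⟩ := Module.Finite.exists_fin' R M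
    let K₀ := LinearMap.ker g
    haveI : IsNoetherian R (Fin k → R) := inferInstance
    haveI : Module.Finite R ↥K₀ := Module.Finite.iff_fg.mpr (IsNoetherian.noetherian K₀)
    have hKq : ∀ q : PrimeSpectrum R,
        Function.Exact (LocalizedModule.map q.asIdeal.primeCompl K₀.subtype)
          (LocalizedModule.map q.asIdeal.primeCompl g) ∧
        Function.Injective (LocalizedModule.map q.asIdeal.primeCompl K₀.subtype) ∧
        Function.Surjective (LocalizedModule.map q.asIdeal.primeCompl g) := fun q =>
      ⟨loc_exact _ _ _ (LinearMap.exact_subtype_ker_map g),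
       LocalizedModule.map_injective _ _ Subtype.val_injective,
       LocalizedModule.map_surjective _ _ hgs⟩
    have hFproj : ∀ q : PrimeSpectrum R, Module.Projective (Localization.AtPrime q.asIdeal)
        (LocalizedModule q.asIdeal.primeCompl (Fin k → R)) := fun q => by
      haveI : Module.Free (Localization.AtPrime q.asIdeal)
          (LocalizedModule q.asIdeal.primeCompl (Fin k → R)) := loc_free _
      infer_instance
    have hshift : PdLE (Localization.AtPrime p.asIdeal) n
        (ModuleCat.of _ (LocalizedModule p.asIdeal.primeCompl ↥K₀)) :=
      pdLE_shift
        (M := ModuleCat.of _ (LocalizedModule p.asIdeal.primeCompl M))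
        (K := ModuleCat.of _ (LocalizedModule p.asIdeal.primeCompl ↥K₀))
        (P := ModuleCat.of _ (LocalizedModule p.asIdeal.primeCompl (Fin k → R)))
        (LocalizedModule.map _ K₀.subtype) (LocalizedModule.map _ g)
        (hFproj p) (hKq p).2.1 (hKq p).2.2 (hKq p).1 hp
    obtain ⟨K, iK1, iK2, iK3, hpK, hall⟩ := ih ↥K₀ p hshift
    refine ⟨K, iK1, iK2, iK3, hpK, ?_⟩
    intro q hq
    exact Or.inr ⟨ModuleCat.of _ (LocalizedModule q.asIdeal.primeCompl ↥K₀),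
      ModuleCat.of _ (LocalizedModule q.asIdeal.primeCompl (Fin k → R)),
      LocalizedModule.map _ K₀.subtype, LocalizedModule.map _ g,
      hFproj q, (hKq q).2.1, (hKq q).2.2, (hKq q).1, hall q hq⟩


/-- For a finitely generated module `M` over a commutative Noetherian ring `R`, the set of
primes `p` such that `M_p` has finite projective dimension over `R_p` is open in `Spec R`. -/
theorem finProjDimLocus_isOpen (R : Type u) [CommRing R] [IsNoetherianRing R]
    (M : Type u) [AddCommGroup M] [Module R M] [Module.Finite R M] :
    IsOpen (finProjDimLocus R M) := by
  rw [isOpen_iff_forall_mem_open]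
  intro p hp
  have hp' : HasFiniteProjDim (Localization.AtPrime p.asIdeal)
      (LocalizedModule p.asIdeal.primeCompl M) := hp
  rw [hfpd_iff_pdLE] at hp'
  obtain ⟨n, hn⟩ := hp'
  obtain ⟨K, _, _, _, hpK, hall⟩ := key_locus R n M p hn
  refine ⟨Module.freeLocus R K, ?_, ?_, hpK⟩
  · intro q hq
    show HasFiniteProjDim (Localization.AtPrime q.asIdeal)
      (LocalizedModule q.asIdeal.primeCompl M)
    rw [hfpd_iff_pdLE]
    exact ⟨n, hall q hq⟩
  · haveI := Module.finitePresentation_of_finite R K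
    exact Module.isOpen_freeLocus
end

section
/- Let R be a commutative Noetherian ring. If for every minimal prime ideal p of R the category of finitely generated (R/p)-modules has a generator, then the category of finitely generated R-modules has a generator. -/
open CategoryTheory

universe u

section AuxRestrict

variable {R A : Type u} [CommRing R] [CommRing A] [Algebra R A]
variable {X Y Z : Type u} [AddCommGroup X] [Module A X] [AddCommGroup Y] [Module A Y]
  [AddCommGroup Z] [Module A Z]

/-- Transport an `A`-linear map to an `R`-linear map between restrictions of scalars. -/
def resMap (φ : X →ₗ[A] Y) : RestrictScalars R A X →ₗ[R] RestrictScalars R A Y where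
  toFun := φ
  map_add' := φ.map_add
  map_smul' r x := by
    simp only [RestrictScalars.smul_def, RingHom.id_apply]
    exact φ.map_smul _ _

@[simp] theorem resMap_apply (φ : X →ₗ[A] Y) (x : RestrictScalars R A X) :
    resMap (R := R) φ x = φ x := rfl

/-- Transport an `A`-linear equivalence to an `R`-linear equivalence. -/
def resEquiv (e : X ≃ₗ[A] Y) : RestrictScalars R A X ≃ₗ[R] RestrictScalars R A Y where
  toFun := e
  invFun := e.symm
  left_inv := e.left_inv
  right_inv := e.right_inv
  map_add' := e.map_add
  map_smul' r x := by
    simp only [RestrictScalars.smul_def, RingHom.id_apply]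
    exact e.map_smul _ _

theorem resFinite (hs : Function.Surjective (algebraMap R A)) (hfin : Module.Finite A X) :
    Module.Finite R (RestrictScalars R A X) := by
  letI := RestrictScalars.moduleOrig R A X
  haveI : Module.Finite R A := Module.Finite.of_surjective (Algebra.linearMap R A) hs
  haveI : Module.Finite A (RestrictScalars R A X) := hfin
  exact Module.Finite.trans A (RestrictScalars R A X)

theorem resRangeKer (φ : X →ₗ[A] Y) (ψ : Y →ₗ[A] Z) (h : LinearMap.range φ = LinearMap.ker ψ) :
    LinearMap.range (resMap (R := R) φ) = LinearMap.ker (resMap (R := R) ψ) := by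
  ext y
  have := SetLike.ext_iff.mp h y
  simp only [LinearMap.mem_range, LinearMap.mem_ker, resMap_apply]
  exact (LinearMap.mem_range (f := φ)).symm.trans (this.trans (LinearMap.mem_ker (f := ψ)))

/-- Any two subsingleton modules are linearly equivalent. -/
def subsingletonLEquiv (R X Y : Type u) [CommRing R] [AddCommGroup X] [Module R X]
    [AddCommGroup Y] [Module R Y] [Subsingleton X] [Subsingleton Y] : X ≃ₗ[R] Y where
  toFun _ := 0
  invFun _ := 0
  left_inv _ := Subsingleton.elim _ _
  right_inv _ := Subsingleton.elim _ _
  map_add' _ _ := Subsingleton.elim _ _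
  map_smul' _ _ := Subsingleton.elim _ _

/-- The restricted module structure, stated over the additive group structure. -/
instance resModuleACG : @Module R (RestrictScalars R A X) _ AddCommGroup.toAddCommMonoid :=
  RestrictScalars.module R A X

end AuxRestrict

theorem ker_toSpanSingleton_eq_annihilator (R M : Type u) [CommRing R] [AddCommGroup M]
    [Module R M] (x : M) :
    LinearMap.ker (LinearMap.toSpanSingleton R M x) = (Submodule.span R {x}).annihilator := by
  ext r
  simp [LinearMap.mem_ker, LinearMap.toSpanSingleton_apply,
    Submodule.mem_annihilator_span_singleton]

/-- If, for every minimal prime `p` of a commutative Noetherian ring `R`, the category of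
finitely generated `(R/p)`-modules has a generator, then the category of finitely generated
`R`-modules has a generator. -/
theorem mod_hasGenerator_of_minimalPrimes (R : Type u) [CommRing R] [IsNoetherianRing R]
    (h : ∀ p ∈ minimalPrimes R, ∃ G : ModuleCat.{u} (R ⧸ p), IsModGenerator (R ⧸ p) G) :
    ∃ G : ModuleCat.{u} R, IsModGenerator R G := by
  classical
  haveI : Finite ↥(minimalPrimes R) := (minimalPrimes.finite_of_isNoetherianRing R).to_subtype
  choose Gp hGp using fun t : ↥(minimalPrimes R) => h t.1 t.2
  haveI hprimeOf : ∀ t : ↥(minimalPrimes R), t.1.IsPrime := fun t => t.2.1.1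
  let Q : ↥(minimalPrimes R) → Type u := fun t => RestrictScalars R (R ⧸ t.1) ↥(Gp t)
  haveI hQfin : ∀ t, Module.Finite R (Q t) := fun t =>
    resFinite Ideal.Quotient.mk_surjective (hGp t).1
  refine ⟨ModuleCat.of R (∀ t, Q t), ?_, ?_⟩
  · exact (inferInstance : Module.Finite R (∀ t, Q t))
  intro S hG hiso hsummand h23
  have finG : Module.Finite R (∀ t, Q t) := inferInstance
  -- step 0 : subsingleton modules belong to S
  have h0 : ∀ Z : ModuleCat.{u} R, Subsingleton Z → Z ∈ S := by
    have hbot : ModuleCat.of R ↥(⊥ : Submodule R R) ∈ S := by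
      refine (h23 (ModuleCat.of R (∀ t, Q t)) (ModuleCat.of R (∀ t, Q t))
          (ModuleCat.of R ↥(⊥ : Submodule R R)) finG finG inferInstance
          LinearMap.id 0 (fun a b hab => hab) (fun z => ⟨0, Subsingleton.elim _ _⟩)
          ?_).1 ⟨hG, hG⟩
      simp [LinearMap.range_id, LinearMap.ker_zero]
    intro Z hZ
    haveI := hZ
    exact hiso _ _ hbot ⟨subsingletonLEquiv R _ _⟩
  -- step 1 : each restricted generator is in S
  have hQS : ∀ t, ModuleCat.of R (Q t) ∈ S := by
    intro t
    refine hsummand (ModuleCat.of R (∀ t, Q t)) (ModuleCat.of R (Q t)) finG (hQfin t) hG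
      ⟨(LinearMap.single R Q t : Q t →ₗ[R] ∀ s, Q s),
       (LinearMap.proj t : (∀ s, Q s) →ₗ[R] Q t), ?_⟩
    ext x
    exact @Pi.single_eq_same _ Q _ (fun i => inferInstance) t x
  -- step 2 : R ⧸ q belongs to S for every prime q
  have hprime : ∀ (q : Ideal R), q.IsPrime → ModuleCat.of R (R ⧸ q) ∈ S := by
    intro q hq
    haveI := hq
    obtain ⟨p, hp, hpq⟩ := Ideal.exists_minimalPrimes_le (bot_le : (⊥ : Ideal R) ≤ q)
    have hsurj : Function.Surjective (algebraMap R (R ⧸ p)) := Ideal.Quotient.mk_surjective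
    set t : ↥(minimalPrimes R) := ⟨p, hp⟩ with ht
    let q' : Ideal (R ⧸ p) := q.map (Ideal.Quotient.mk p)
    -- the class of (R⧸p)-modules whose restriction lies in S
    let S' : Set (ModuleCat.{u} (R ⧸ p)) :=
      { N | ModuleCat.of R (RestrictScalars R (R ⧸ p) ↥N) ∈ S }
    have hGp' : Gp t ∈ S' := hQS t
    have hiso' : ∀ M N : ModuleCat.{u} (R ⧸ p), M ∈ S' → Nonempty (M ≃ₗ[R ⧸ p] N) → N ∈ S' := by
      rintro M N hM ⟨e⟩
      exact hiso _ _ hM ⟨resEquiv (R := R) (A := R ⧸ p) (X := ↥M) (Y := ↥N) e⟩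
    have hsummand' : ∀ M N : ModuleCat.{u} (R ⧸ p), Module.Finite (R ⧸ p) M →
        Module.Finite (R ⧸ p) N → M ∈ S' →
        (∃ (i : N →ₗ[R ⧸ p] M) (r : M →ₗ[R ⧸ p] N), r ∘ₗ i = LinearMap.id) → N ∈ S' := by
      rintro M N finM finN hM ⟨i, r, hri⟩
      refine hsummand (ModuleCat.of R (RestrictScalars R (R ⧸ p) ↥M))
        (ModuleCat.of R (RestrictScalars R (R ⧸ p) ↥N))
        (resFinite (A := R ⧸ p) (X := ↥M) hsurj finM)
        (resFinite (A := R ⧸ p) (X := ↥N) hsurj finN) hM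
        ⟨resMap (R := R) (A := R ⧸ p) (X := ↥N) (Y := ↥M) i,
         resMap (R := R) (A := R ⧸ p) (X := ↥M) (Y := ↥N) r, ?_⟩
      ext x
      exact DFunLike.congr_fun hri x
    have h23' : ∀ X Y Z : ModuleCat.{u} (R ⧸ p), Module.Finite (R ⧸ p) X →
        Module.Finite (R ⧸ p) Y → Module.Finite (R ⧸ p) Z →
        ∀ (f : X →ₗ[R ⧸ p] Y) (g : Y →ₗ[R ⧸ p] Z), Function.Injective f → Function.Surjective g →
        LinearMap.range f = LinearMap.ker g →
        ((X ∈ S' ∧ Y ∈ S' → Z ∈ S') ∧ (Y ∈ S' ∧ Z ∈ S' → X ∈ S') ∧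
          (X ∈ S' ∧ Z ∈ S' → Y ∈ S')) := by
      intro X Y Z finX finY finZ f g hf hg hfg
      exact h23 (ModuleCat.of R (RestrictScalars R (R ⧸ p) ↥X))
        (ModuleCat.of R (RestrictScalars R (R ⧸ p) ↥Y))
        (ModuleCat.of R (RestrictScalars R (R ⧸ p) ↥Z))
        (resFinite (A := R ⧸ p) (X := ↥X) hsurj finX)
        (resFinite (A := R ⧸ p) (X := ↥Y) hsurj finY)
        (resFinite (A := R ⧸ p) (X := ↥Z) hsurj finZ)
        (resMap (R := R) (A := R ⧸ p) (X := ↥X) (Y := ↥Y) f)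
        (resMap (R := R) (A := R ⧸ p) (X := ↥Y) (Y := ↥Z) g)
        (fun a b hab => hf hab) (fun z => hg z)
        (resRangeKer (R := R) (A := R ⧸ p) f g hfg)
    have hfinq' : Module.Finite (R ⧸ p) ((R ⧸ p) ⧸ q') :=
      Module.Finite.of_surjective q'.mkQ (Submodule.Quotient.mk_surjective q')
    have hmem : ModuleCat.of (R ⧸ p) ((R ⧸ p) ⧸ q') ∈ S' :=
      (hGp t).2 S' hGp' hiso' hsummand' h23' (ModuleCat.of (R ⧸ p) ((R ⧸ p) ⧸ q')) hfinq'
    -- the restriction of (R⧸p)⧸q' is R-isomorphic to R⧸q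
    let e := DoubleQuot.quotQuotEquivQuotOfLE hpq
    refine hiso _ _ hmem ⟨?_⟩
    refine
      { toFun := e
        invFun := e.symm
        left_inv := e.left_inv
        right_inv := e.right_inv
        map_add' := e.map_add
        map_smul' := ?_ }
    intro r x
    obtain ⟨y, rfl⟩ := Ideal.Quotient.mk_surjective (I := q') x
    obtain ⟨b, rfl⟩ := Ideal.Quotient.mk_surjective (I := p) y
    simp only [RingHom.id_apply]
    have h1 : (algebraMap R (R ⧸ p) r) • (Ideal.Quotient.mk q' (Ideal.Quotient.mk p b))
        = Ideal.Quotient.mk q' (Ideal.Quotient.mk p (r * b)) := by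
      rw [← Ideal.Quotient.mk_eq_mk, ← Ideal.Quotient.mk_eq_mk, ← Submodule.Quotient.mk_smul,
        Ideal.Quotient.algebraMap_eq, Ideal.Quotient.mk_eq_mk b, smul_eq_mul, ← map_mul,
        Ideal.Quotient.mk_eq_mk]
    have h2 : ∀ z : R, e (Ideal.Quotient.mk q' (Ideal.Quotient.mk p z)) = Ideal.Quotient.mk q z :=
      fun z => DoubleQuot.quotQuotEquivQuotOfLE_quotQuotMk z hpq
    change e ((algebraMap R (R ⧸ p) r) • (Ideal.Quotient.mk q' (Ideal.Quotient.mk p b))) = _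
    rw [h1, h2, h2,
      show r • (Ideal.Quotient.mk q b) = Ideal.Quotient.mk q (r * b) from
        (Submodule.Quotient.mk_smul q r b).symm.trans
          (by rw [smul_eq_mul]; exact Ideal.Quotient.mk_eq_mk _)]
  -- step 3 : main induction over submodules
  intro M finM
  haveI := finM
  haveI : IsNoetherian R ↥M := isNoetherian_of_isNoetherianRing_of_finite R M
  obtain ⟨N, hNS, hNmax⟩ :=
    (set_has_maximal_iff_noetherian.mpr (inferInstance : IsNoetherian R ↥M))
      {N : Submodule R ↥M | ModuleCat.of R ↥N ∈ S}
      ⟨⊥, h0 _ inferInstance⟩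
  have hNtop : N = ⊤ := by
    by_contra hne
    haveI : Nontrivial (↥M ⧸ N) :=
      Submodule.Quotient.nontrivial_iff.mpr hne
    obtain ⟨p', hp'⟩ := associatedPrimes.nonempty R (↥M ⧸ N)
    obtain ⟨hp'prime, x, hx⟩ := isAssociatedPrime_iff.mp hp'
    have hx0 : x ≠ 0 := by
      rintro rfl
      apply hp'prime.ne_top
      rw [hx, Submodule.bot_colon', Submodule.span_zero_singleton, Submodule.annihilator_bot]
    let φ : R →ₗ[R] ↥M ⧸ N := LinearMap.toSpanSingleton R _ x
    have hker : LinearMap.ker φ = p' :=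
      (ker_toSpanSingleton_eq_annihilator R _ x).trans (hx.trans Submodule.bot_colon').symm
    let W : Submodule R (↥M ⧸ N) := LinearMap.range φ
    let N' : Submodule R ↥M := W.comap N.mkQ
    have hNN' : N ≤ N' := by
      intro m hm
      show N.mkQ m ∈ W
      rw [Submodule.mkQ_apply, (Submodule.Quotient.mk_eq_zero N).mpr hm]
      exact zero_mem W
    have hxW : x ∈ W := ⟨1, by simp [φ]⟩
    obtain ⟨m, hm⟩ := Submodule.Quotient.mk_surjective N x
    have hlt : N < N' := by
      refine lt_of_le_of_ne hNN' fun hEq => ?_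
      have hmN' : m ∈ N' := by
        show N.mkQ m ∈ W
        rw [Submodule.mkQ_apply, hm]
        exact hxW
      rw [← hEq] at hmN'
      exact hx0 (by rw [← hm, Submodule.Quotient.mk_eq_zero]; exact hmN')
    let ψ : ↥N' →ₗ[R] ↥M ⧸ N := N.mkQ.comp N'.subtype
    have hmemW : ∀ y : ↥N', ψ y ∈ W := fun y => y.2
    let g0 : ↥N' →ₗ[R] ↥W := ψ.codRestrict W hmemW
    have hg0surj : Function.Surjective g0 := by
      rintro ⟨w, hw⟩
      obtain ⟨m', hm'⟩ := Submodule.Quotient.mk_surjective N w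
      refine ⟨⟨m', ?_⟩, Subtype.ext ?_⟩
      · show N.mkQ m' ∈ W
        rw [Submodule.mkQ_apply, hm']
        exact hw
      · show ψ _ = w
        simp [ψ, hm']
    let eW : ↥W ≃ₗ[R] R ⧸ p' :=
      (φ.quotKerEquivRange).symm.trans (Submodule.quotEquivOfEq _ _ hker)
    let g : ↥N' →ₗ[R] R ⧸ p' := eW.toLinearMap ∘ₗ g0
    have hgsurj : Function.Surjective g := eW.surjective.comp hg0surj
    let f : ↥N →ₗ[R] ↥N' := Submodule.inclusion hNN'
    have hfinj : Function.Injective f := Submodule.inclusion_injective hNN'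
    have hrk : LinearMap.range f = LinearMap.ker g := by
      ext y
      rw [Submodule.range_inclusion]
      constructor
      · intro hy
        have : ψ y = 0 := by
          show N.mkQ (y : ↥M) = 0
          rw [Submodule.mkQ_apply, Submodule.Quotient.mk_eq_zero]
          exact hy
        show eW (g0 y) = 0
        rw [show g0 y = 0 from Subtype.ext this, map_zero]
      · intro hy
        have h1 : eW (g0 y) = 0 := hy
        have h2 : g0 y = 0 := by
          apply eW.injective
          rw [h1, map_zero]
        have h3 : ψ y = 0 := congrArg Subtype.val h2
        have h4 : N.mkQ (y : ↥M) = 0 := h3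
        rw [Submodule.mkQ_apply, Submodule.Quotient.mk_eq_zero] at h4
        exact h4
    haveI finN : Module.Finite R ↥N := Module.Finite.iff_fg.mpr (IsNoetherian.noetherian N)
    haveI finN' : Module.Finite R ↥N' := Module.Finite.iff_fg.mpr (IsNoetherian.noetherian N')
    haveI finp' : Module.Finite R (R ⧸ p') :=
      Module.Finite.of_surjective p'.mkQ (Submodule.Quotient.mk_surjective p')
    have hN'S : ModuleCat.of R ↥N' ∈ S :=
      (h23 (ModuleCat.of R ↥N) (ModuleCat.of R ↥N') (ModuleCat.of R (R ⧸ p'))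
        finN finN' finp' f g hfinj hgsurj hrk).2.2 ⟨hNS, hprime p' hp'prime⟩
    exact hNmax N' hN'S hlt
  subst hNtop
  exact hiso _ _ hNS ⟨Submodule.topEquiv⟩
end
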